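/- (Lemma B.2, with an explicit valid sample size.) Let T : S → A → S be a shared transition function and R_i : S → A → ℝ, i ∈ I, reward functions forming a family of deterministic MDPs with shared transitions over a finite index set I, let D be a probability mass function on I, and let H ≥ 1. Fix a state s ∈ S and h < H, and assume 0 ≤ R_i(s,a) + V*_i(h, T(s,a)) ≤ 1 for all i ∈ I and a ∈ A. Suppose q_a : I → ℝ (for each a ∈ A) satisfies R_i(s,a) + V*_i(h, T(s,a)) ≥ q_a(i) ≥ R_i(s,a) + V*_i(h, T(s,a)) − β for all i, a. Let ε, δ > 0 and let n be a positive integer with n ≥ (2H²/ε²)·log(4·H·|A|/δ). If ω = (ω_1, …, ω_n) is drawn from the n-fold product of D, then with probability at least 1 − δ/H, simultaneously for every a ∈ A: |(1/n)·Σ_{j=1}^n q_a(ω_j) − E_{i~D}[R_i(s,a) + V*_i(h, T(s,a))]| ≤ β + ε/(2H). -/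

import Mathlib

open scoped BigOperators

/-- The `h`-step value of a stationary deterministic policy `π` in the deterministic MDP
with transition function `T` and reward function `R`. -/
noncomputable def detVal {S A : Type*} (T : S → A → S) (R : S → A → ℝ)
    (π : S → A) : ℕ → S → ℝ
  | 0, _ => 0
  | h + 1, s => R s (π s) + detVal T R π h (T s (π s))

/-- The `h`-step optimal value in the deterministic MDP `(T, R)`. -/
noncomputable def detOptVal {S A : Type*} [Fintype A] [Nonempty A]
    (T : S → A → S) (R : S → A → ℝ) : ℕ → S → ℝ
  | 0, _ => 0
  | h + 1, s => ⨆ a : A, (R s a + detOptVal T R h (T s a))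

/-- Expectation of `f : I → ℝ` under the probability mass function `D` on the finite type
`I`: `E_{i~D}[f(i)] = Σ_i D(i)·f(i)`. -/
noncomputable def expectD {I : Type*} [Fintype I] (D : PMF I) (f : I → ℝ) : ℝ :=
  ∑ i : I, (D i).toReal * f i

section HoeffAux
open MeasureTheory Finset Real
open scoped ENNReal

lemma hoeff_pos {m : ℝ} (hm0 : 0 ≤ m) (hm1 : m ≤ 1) (u : ℝ) :
    0 < 1 - m + m * Real.exp u := by
  rcases le_or_gt (Real.exp u) 1 with h | h
  · nlinarith [Real.exp_pos u]
  · nlinarith [Real.exp_pos u]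

lemma hoeff_core {m : ℝ} (hm0 : 0 ≤ m) (hm1 : m ≤ 1) (u : ℝ) :
    1 - m + m * Real.exp u ≤ Real.exp (u * m + u ^ 2 / 8) := by
  have hP := fun v => hoeff_pos hm0 hm1 v
  set g : ℝ → ℝ := fun v => v * m + v ^ 2 / 8 - Real.log (1 - m + m * Real.exp v) with hg
  set g' : ℝ → ℝ := fun v => m + v / 4 - m * Real.exp v / (1 - m + m * Real.exp v) with hg'
  have hP' : ∀ v, HasDerivAt (fun v => 1 - m + m * Real.exp v) (m * Real.exp v) v := by
    intro v
    simpa using ((Real.hasDerivAt_exp v).const_mul m).const_add (1 - m)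
  have hd : ∀ v, HasDerivAt g (g' v) v := by
    intro v
    have h1 : HasDerivAt (fun v : ℝ => v * m + v ^ 2 / 8) (m + v / 4) v := by
      have := ((hasDerivAt_id v).mul_const m).add
        (((hasDerivAt_pow 2 v).div_const 8))
      exact this.congr_deriv (by norm_num; ring)
    have h2 : HasDerivAt (fun v => Real.log (1 - m + m * Real.exp v))
        (m * Real.exp v / (1 - m + m * Real.exp v)) v := by
      have := (hP' v).log (ne_of_gt (hP v))
      simpa using this
    exact h1.sub h2
  have hd' : ∀ v, HasDerivAt g'
      (1 / 4 - m * Real.exp v * (1 - m) / (1 - m + m * Real.exp v) ^ 2) v := by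
    intro v
    have hq : HasDerivAt (fun v => m * Real.exp v / (1 - m + m * Real.exp v))
        ((m * Real.exp v * (1 - m + m * Real.exp v) -
          m * Real.exp v * (m * Real.exp v)) / (1 - m + m * Real.exp v) ^ 2) v := by
      exact ((Real.hasDerivAt_exp v).const_mul m).div (hP' v) (ne_of_gt (hP v))
    have h1 : HasDerivAt (fun v : ℝ => m + v / 4) (1 / 4) v := by
      simpa using ((hasDerivAt_id v).div_const 4).const_add m
    have := h1.sub hq
    exact this.congr_deriv (by field_simp; ring)
  have hg''nonneg : ∀ v, 0 ≤ 1 / 4 - m * Real.exp v * (1 - m) / (1 - m + m * Real.exp v) ^ 2 := by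
    intro v
    rw [sub_nonneg, div_le_iff₀ (pow_pos (hP v) 2)]
    nlinarith [sq_nonneg (1 - m - m * Real.exp v), Real.exp_pos v]
  have hg'mono : Monotone g' :=
    monotone_of_deriv_nonneg (fun v => (hd' v).differentiableAt) (by
      intro v
      rw [(hd' v).deriv]
      exact hg''nonneg v)
  have hg'0 : g' 0 = 0 := by
    simp [hg']
  have hgd : Differentiable ℝ g := fun v => (hd v).differentiableAt
  have hg0 : g 0 = 0 := by simp [hg]
  have hkey : 0 ≤ g u := by
    rcases le_or_gt 0 u with hu | hu
    · have : MonotoneOn g (Set.Ici 0) := by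
        apply monotoneOn_of_deriv_nonneg (convex_Ici 0) hgd.continuous.continuousOn
          (hgd.differentiableOn)
        intro v hv
        rw [(hd v).deriv, ← hg'0]
        exact hg'mono (le_of_lt (by simpa using hv))
      have := this (Set.self_mem_Ici) (by exact hu) hu
      simpa [hg0] using this
    · have : AntitoneOn g (Set.Iic 0) := by
        apply antitoneOn_of_deriv_nonpos (convex_Iic 0) hgd.continuous.continuousOn
          (hgd.differentiableOn)
        intro v hv
        rw [(hd v).deriv, ← hg'0]
        exact hg'mono (le_of_lt (by simpa using hv))
      have := this (by exact le_of_lt hu : u ∈ Set.Iic 0) Set.self_mem_Iic (le_of_lt hu)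
      simpa [hg0] using this
  have hlog : Real.log (1 - m + m * Real.exp u) ≤ u * m + u ^ 2 / 8 := by
    have : g u = u * m + u ^ 2 / 8 - Real.log (1 - m + m * Real.exp u) := rfl
    linarith [hkey, this ▸ hkey]
  calc 1 - m + m * Real.exp u
      = Real.exp (Real.log (1 - m + m * Real.exp u)) := (Real.exp_log (hP u)).symm
    _ ≤ Real.exp (u * m + u ^ 2 / 8) := Real.exp_le_exp.mpr hlog


variable {I : Type*} [Fintype I] [MeasurableSpace I] [MeasurableSingletonClass I]

lemma pmf_sum_toReal (D : PMF I) : ∑ i : I, (D i).toReal = 1 := by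
  have h := D.tsum_coe
  rw [tsum_fintype] at h
  have h2 : (∑ i : I, D i).toReal = ((1 : ℝ≥0∞)).toReal := by rw [h]
  rwa [ENNReal.toReal_sum (fun i _ => (D.apply_ne_top i)), ENNReal.toReal_one] at h2

lemma measure_eq_sum_sing {Ω : Type*} [Finite Ω] [MeasurableSpace Ω]
    [MeasurableSingletonClass Ω] (μ : Measure Ω) (S : Set Ω) :
    μ S = ∑ ω ∈ S.toFinite.toFinset, μ {ω} := by
  classical
  have h := MeasureTheory.sum_measure_preimage_singleton (μ := μ) (f := id) S.toFinite.toFinset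
    (fun y _ => by simpa using MeasurableSet.singleton y)
  simpa [Set.Finite.coe_toFinset] using h.symm

lemma pi_singleton (D : PMF I) (n : ℕ) (ω : Fin n → I) :
    (Measure.pi fun _ : Fin n => D.toMeasure) {ω} = ∏ j : Fin n, D (ω j) := by
  rw [← Set.univ_pi_singleton ω, Measure.pi_pi]
  congr 1
  ext j
  exact D.toMeasure_apply_singleton _ (measurableSet_singleton _)

lemma chernoff_upper (D : PMF I) (f : I → ℝ) (hf0 : ∀ i, 0 ≤ f i) (hf1 : ∀ i, f i ≤ 1)
    (n : ℕ) (s : ℝ) (hs : 0 ≤ s) :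
    (Measure.pi fun _ : Fin n => D.toMeasure)
      {ω : Fin n → I | (n : ℝ) * ((∑ i : I, (D i).toReal * f i) + s) ≤ ∑ j : Fin n, f (ω j)}
      ≤ ENNReal.ofReal (Real.exp (-2 * n * s ^ 2)) := by
  classical
  set m : ℝ := ∑ i : I, (D i).toReal * f i with hm
  set lam : ℝ := 4 * s with hlam
  have hw0 : ∀ i, (0:ℝ) ≤ (D i).toReal := fun i => ENNReal.toReal_nonneg
  have hwsum : ∑ i : I, (D i).toReal = 1 := pmf_sum_toReal D
  have hm0 : 0 ≤ m := Finset.sum_nonneg fun i _ => mul_nonneg (hw0 i) (hf0 i)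
  have hm1 : m ≤ 1 := by
    rw [← hwsum]
    exact Finset.sum_le_sum fun i _ => mul_le_of_le_one_right (hw0 i) (hf1 i)
  have hlam0 : 0 ≤ lam := by positivity
  have hmgf : ∑ i : I, (D i) * ENNReal.ofReal (Real.exp (lam * f i))
      ≤ ENNReal.ofReal (Real.exp (lam * m + lam ^ 2 / 8)) := by
    have heq : ∑ i : I, (D i) * ENNReal.ofReal (Real.exp (lam * f i))
        = ENNReal.ofReal (∑ i : I, (D i).toReal * Real.exp (lam * f i)) := by
      rw [ENNReal.ofReal_sum_of_nonneg fun i _ =>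
        mul_nonneg (hw0 i) (Real.exp_nonneg _)]
      refine Finset.sum_congr rfl fun i _ => ?_
      rw [ENNReal.ofReal_mul (hw0 i), ENNReal.ofReal_toReal (D.apply_ne_top i)]
    rw [heq]
    apply ENNReal.ofReal_le_ofReal
    have hconv : ∀ i : I, Real.exp (lam * f i) ≤ 1 - f i + f i * Real.exp lam := by
      intro i
      have hc := convexOn_exp.2 (Set.mem_univ 0) (Set.mem_univ lam)
        (by linarith [hf1 i] : (0:ℝ) ≤ 1 - f i) (hf0 i) (by ring)
      rw [smul_eq_mul, smul_eq_mul, smul_eq_mul, smul_eq_mul, mul_zero, zero_add,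
        Real.exp_zero, mul_one, mul_comm (f i) lam] at hc
      exact hc
    have hsplit : ∑ i : I, (D i).toReal * (1 - f i + f i * Real.exp lam)
        = (∑ i : I, (D i).toReal) - (∑ i : I, (D i).toReal * f i)
          + (∑ i : I, (D i).toReal * f i) * Real.exp lam := by
      rw [Finset.sum_mul, ← Finset.sum_sub_distrib, ← Finset.sum_add_distrib]
      exact Finset.sum_congr rfl fun i _ => by ring
    calc ∑ i : I, (D i).toReal * Real.exp (lam * f i)
        ≤ ∑ i : I, (D i).toReal * (1 - f i + f i * Real.exp lam) :=
          Finset.sum_le_sum fun i _ => mul_le_mul_of_nonneg_left (hconv i) (hw0 i)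
      _ = 1 - m + m * Real.exp lam := by rw [hsplit, hwsum]
      _ ≤ Real.exp (lam * m + lam ^ 2 / 8) := hoeff_core hm0 hm1 lam
  set μ := (Measure.pi fun _ : Fin n => D.toMeasure)
  set E : Set (Fin n → I) :=
    {ω : Fin n → I | (n : ℝ) * (m + s) ≤ ∑ j : Fin n, f (ω j)} with hE
  calc μ E = ∑ ω ∈ E.toFinite.toFinset, ∏ j : Fin n, D (ω j) := by
        rw [measure_eq_sum_sing]
        exact Finset.sum_congr rfl fun ω _ => pi_singleton D n ω
    _ ≤ ∑ ω ∈ E.toFinite.toFinset,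
          ENNReal.ofReal (Real.exp (-(lam * (n * (m + s))))) *
            ∏ j : Fin n, ((D (ω j)) * ENNReal.ofReal (Real.exp (lam * f (ω j)))) := by
        refine Finset.sum_le_sum fun ω hω => ?_
        have hωE0 : ω ∈ E := (Set.Finite.mem_toFinset _).mp hω
        have hωE : (n : ℝ) * (m + s) ≤ ∑ j : Fin n, f (ω j) := hωE0
        have key : (1:ℝ≥0∞) ≤ ENNReal.ofReal (Real.exp (-(lam * (n * (m + s)))) *
            Real.exp (∑ j : Fin n, lam * f (ω j))) := by
          rw [← Real.exp_add]
          apply ENNReal.one_le_ofReal.mpr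
          apply Real.one_le_exp
          have h1 := mul_le_mul_of_nonneg_left hωE hlam0
          rw [← Finset.mul_sum]
          nlinarith
        calc ∏ j : Fin n, D (ω j) = 1 * ∏ j : Fin n, D (ω j) := (one_mul _).symm
          _ ≤ ENNReal.ofReal (Real.exp (-(lam * (n * (m + s)))) *
                Real.exp (∑ j : Fin n, lam * f (ω j))) * ∏ j : Fin n, D (ω j) :=
              mul_le_mul_left key _
          _ = ENNReal.ofReal (Real.exp (-(lam * (n * (m + s))))) *
                ∏ j : Fin n, ((D (ω j)) * ENNReal.ofReal (Real.exp (lam * f (ω j)))) := by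
              rw [Finset.prod_mul_distrib, ← ENNReal.ofReal_prod_of_nonneg
                (fun j _ => Real.exp_nonneg _), ← Real.exp_sum,
                ENNReal.ofReal_mul (Real.exp_nonneg _)]
              ring
    _ ≤ ENNReal.ofReal (Real.exp (-(lam * (n * (m + s))))) *
          ∑ ω : Fin n → I, ∏ j : Fin n, ((D (ω j)) * ENNReal.ofReal (Real.exp (lam * f (ω j)))) := by
        rw [← Finset.mul_sum]
        exact mul_le_mul_right (Finset.sum_le_sum_of_subset (Finset.subset_univ _)) _
    _ = ENNReal.ofReal (Real.exp (-(lam * (n * (m + s))))) *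
          (∑ i : I, (D i) * ENNReal.ofReal (Real.exp (lam * f i))) ^ n := by
        congr 1
        rw [← Fintype.piFinset_univ, Finset.sum_prod_piFinset (Finset.univ : Finset I)
          (fun (_ : Fin n) i => D i * ENNReal.ofReal (Real.exp (lam * f i)))]
        simp [Finset.prod_const]
    _ ≤ ENNReal.ofReal (Real.exp (-(lam * (n * (m + s))))) *
          (ENNReal.ofReal (Real.exp (lam * m + lam ^ 2 / 8))) ^ n :=
        mul_le_mul_right (pow_le_pow_left' hmgf n) _
    _ = ENNReal.ofReal (Real.exp (-2 * n * s ^ 2)) := by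
        rw [← ENNReal.ofReal_pow (Real.exp_nonneg _), ← Real.exp_nat_mul,
          ← ENNReal.ofReal_mul (Real.exp_nonneg _), ← Real.exp_add]
        congr 1
        rw [hlam]
        ring

end HoeffAux

open MeasureTheory
open scoped ENNReal

/-- **Lemma B.2** (with an explicit valid sample size).  Drawing `n` i.i.d. samples
`ω_1, …, ω_n ~ D` with `n ≥ (2H²/ε²)·log(4·H·|A|/δ)`, with probability at least `1 − δ/H`
the empirical averages of the `β`-accurate Q-estimates are simultaneously, for every
action, within `β + ε/(2H)` of the expected optimal Q-values. -/

theorem lemma_B2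
    {S A I : Type*} [Fintype S] [Nonempty S] [Fintype A] [Nonempty A]
    [Fintype I] [Nonempty I] [MeasurableSpace I] [MeasurableSingletonClass I]
    (T : S → A → S) (R : I → S → A → ℝ)
    (D : PMF I)
    (H : ℕ) (hH : 1 ≤ H)
    (β : ℝ) (hβ : 0 ≤ β)
    (s : S) (h : ℕ) (hh : h < H)
    (hrange : ∀ i : I, ∀ a : A,
      0 ≤ R i s a + detOptVal T (R i) h (T s a) ∧
      R i s a + detOptVal T (R i) h (T s a) ≤ 1)
    (q : A → I → ℝ)
    (hqub : ∀ i : I, ∀ a : A, q a i ≤ R i s a + detOptVal T (R i) h (T s a))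
    (hqlb : ∀ i : I, ∀ a : A,
      R i s a + detOptVal T (R i) h (T s a) - β ≤ q a i)
    (ε δ : ℝ) (hε : 0 < ε) (hδ : 0 < δ)
    (n : ℕ) (hn : 0 < n)
    (hnsize : (2 * (H : ℝ) ^ 2 / ε ^ 2) * Real.log (4 * H * (Fintype.card A) / δ)
      ≤ (n : ℝ)) :
    ENNReal.ofReal (1 - δ / H) ≤
      (MeasureTheory.Measure.pi fun _ : Fin n => D.toMeasure)
        {ω : Fin n → I | ∀ a : A,
          |(1 / (n : ℝ)) * (∑ j : Fin n, q a (ω j)) -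
            expectD D (fun i => R i s a + detOptVal T (R i) h (T s a))| ≤
              β + ε / (2 * H)} := by
  classical
  rcases le_or_gt (1 - δ / H) 0 with h0 | h0
  · rw [ENNReal.ofReal_eq_zero.mpr h0]
    exact zero_le
  set μ := (MeasureTheory.Measure.pi fun _ : Fin n => D.toMeasure) with hμ
  have hHpos : (0:ℝ) < H := by
    have : (1:ℝ) ≤ H := by exact_mod_cast hH
    linarith
  have hnpos : (0:ℝ) < n := by exact_mod_cast hn
  have hcardpos : (0:ℝ) < Fintype.card A := by
    have := Fintype.card_pos (α := A)
    exact_mod_cast this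
  set s₀ : ℝ := ε / (2 * H) with hs₀
  have hs₀pos : 0 < s₀ := by positivity
  set f : A → I → ℝ := fun a i => R i s a + detOptVal T (R i) h (T s a) with hfdef
  have hf0 : ∀ a i, 0 ≤ f a i := fun a i => (hrange i a).1
  have hf1 : ∀ a i, f a i ≤ 1 := fun a i => (hrange i a).2
  set m : A → ℝ := fun a => ∑ i : I, (D i).toReal * f a i with hmdef
  set G : Set (Fin n → I) := {ω : Fin n → I | ∀ a : A,
      |(1 / (n : ℝ)) * (∑ j : Fin n, q a (ω j)) -
        expectD D (fun i => R i s a + detOptVal T (R i) h (T s a))| ≤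
          β + ε / (2 * H)} with hG
  set U : A → Set (Fin n → I) :=
    fun a => {ω : Fin n → I | (n : ℝ) * (m a + s₀) ≤ ∑ j : Fin n, f a (ω j)} with hU
  set Lo : A → Set (Fin n → I) :=
    fun a => {ω : Fin n → I |
      (n : ℝ) * ((∑ i : I, (D i).toReal * (1 - f a i)) + s₀) ≤
        ∑ j : Fin n, (1 - f a (ω j))} with hLo
  have hexpm : ∀ a, expectD D (fun i => R i s a + detOptVal T (R i) h (T s a)) = m a :=
    fun a => rfl
  have hsub : Gᶜ ⊆ ⋃ a : A, (U a ∪ Lo a) := by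
    intro ω hω
    simp only [hG, Set.mem_compl_iff, Set.mem_setOf_eq, not_forall] at hω
    obtain ⟨a, ha⟩ := hω
    rw [not_le, hexpm a] at ha
    refine Set.mem_iUnion.mpr ⟨a, ?_⟩
    have hq1 : ∑ j : Fin n, q a (ω j) ≤ ∑ j : Fin n, f a (ω j) :=
      Finset.sum_le_sum fun j _ => hqub _ _
    have hq2 : (∑ j : Fin n, f a (ω j)) - n * β ≤ ∑ j : Fin n, q a (ω j) := by
      have := Finset.sum_le_sum (fun (j : Fin n) (_ : j ∈ Finset.univ) => hqlb (ω j) a)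
      rw [Finset.sum_sub_distrib, Finset.sum_const, Finset.card_univ, Fintype.card_fin,
        nsmul_eq_mul] at this
      exact this
    have hninv : (n : ℝ) * ((1 / (n : ℝ)) * (∑ j : Fin n, q a (ω j)))
        = ∑ j : Fin n, q a (ω j) := by
      field_simp
    rcases lt_abs.mp ha with hcase | hcase
    · left
      show (n : ℝ) * (m a + s₀) ≤ ∑ j : Fin n, f a (ω j)
      have h1 := mul_lt_mul_of_pos_left hcase hnpos
      rw [mul_sub, hninv] at h1
      nlinarith [hq1]
    · right
      show (n : ℝ) * ((∑ i : I, (D i).toReal * (1 - f a i)) + s₀) ≤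
        ∑ j : Fin n, (1 - f a (ω j))
      have hsumw : ∑ i : I, (D i).toReal * (1 - f a i) = 1 - m a := by
        have : ∑ i : I, (D i).toReal * (1 - f a i)
            = (∑ i : I, (D i).toReal) - ∑ i : I, (D i).toReal * f a i := by
          rw [← Finset.sum_sub_distrib]
          exact Finset.sum_congr rfl fun i _ => by ring
        rw [this, pmf_sum_toReal D, hmdef]
      have hsumf : ∑ j : Fin n, (1 - f a (ω j)) = n - ∑ j : Fin n, f a (ω j) := by
        rw [Finset.sum_sub_distrib, Finset.sum_const, Finset.card_univ, Fintype.card_fin,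
          nsmul_eq_mul, mul_one]
      rw [hsumw, hsumf]
      have h1 := mul_lt_mul_of_pos_left hcase hnpos
      rw [mul_neg, mul_sub, hninv] at h1
      nlinarith [hq2]
  have hEbound : ∀ a : A, μ (U a ∪ Lo a) ≤
      2 * ENNReal.ofReal (Real.exp (-2 * n * s₀ ^ 2)) := by
    intro a
    have h1 : μ (U a) ≤ ENNReal.ofReal (Real.exp (-2 * n * s₀ ^ 2)) :=
      chernoff_upper D (f a) (hf0 a) (hf1 a) n s₀ hs₀pos.le
    have h2 : μ (Lo a) ≤ ENNReal.ofReal (Real.exp (-2 * n * s₀ ^ 2)) :=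
      chernoff_upper D (fun i => 1 - f a i)
        (fun i => by linarith [hf1 a i]) (fun i => by linarith [hf0 a i]) n s₀ hs₀pos.le
    calc μ (U a ∪ Lo a) ≤ μ (U a) + μ (Lo a) := measure_union_le _ _
      _ ≤ _ := by rw [two_mul]; exact add_le_add h1 h2
  have hbad : μ Gᶜ ≤ ENNReal.ofReal (δ / (2 * H)) := by
    have hδH : δ < H := by
      by_contra hc
      push_neg at hc
      have : 1 ≤ δ / H := (one_le_div hHpos).mpr hc
      linarith
    have hexps : Real.exp (-2 * n * s₀ ^ 2) ≤ δ / (4 * H * Fintype.card A) := by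
      have hargpos : (0:ℝ) < 4 * H * Fintype.card A / δ := by positivity
      have hL : Real.log (4 * H * Fintype.card A / δ) ≤ n * ε ^ 2 / (2 * H ^ 2) := by
        have := mul_le_mul_of_nonneg_left hnsize (le_of_lt (by positivity : (0:ℝ) < ε ^ 2 / (2 * H ^ 2)))
        have heq : ε ^ 2 / (2 * H ^ 2) * (2 * (H : ℝ) ^ 2 / ε ^ 2 *
            Real.log (4 * H * (Fintype.card A) / δ))
            = Real.log (4 * H * (Fintype.card A) / δ) := by
          field_simp
        rw [heq] at this
        calc Real.log (4 * H * (Fintype.card A) / δ) ≤ ε ^ 2 / (2 * H ^ 2) * n := this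
          _ = n * ε ^ 2 / (2 * H ^ 2) := by ring
      have hs₀sq : -2 * (n : ℝ) * s₀ ^ 2 = -(n * ε ^ 2 / (2 * H ^ 2)) := by
        rw [hs₀]
        field_simp
      calc Real.exp (-2 * n * s₀ ^ 2) = Real.exp (-(n * ε ^ 2 / (2 * H ^ 2))) := by
            rw [hs₀sq]
        _ ≤ Real.exp (-(Real.log (4 * H * Fintype.card A / δ))) :=
            Real.exp_le_exp.mpr (by linarith)
        _ = δ / (4 * H * Fintype.card A) := by
            rw [Real.exp_neg, Real.exp_log hargpos, inv_div]
    calc μ Gᶜ ≤ μ (⋃ a : A, (U a ∪ Lo a)) := measure_mono hsub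
      _ ≤ ∑' a : A, μ (U a ∪ Lo a) := measure_iUnion_le _
      _ = ∑ a : A, μ (U a ∪ Lo a) := tsum_fintype _
      _ ≤ ∑ a : A, 2 * ENNReal.ofReal (Real.exp (-2 * n * s₀ ^ 2)) :=
          Finset.sum_le_sum fun a _ => hEbound a
      _ = (Fintype.card A : ℝ≥0∞) * (2 * ENNReal.ofReal (Real.exp (-2 * n * s₀ ^ 2))) := by
          rw [Finset.sum_const, Finset.card_univ, nsmul_eq_mul]
      _ ≤ (Fintype.card A : ℝ≥0∞) * (2 * ENNReal.ofReal (δ / (4 * H * Fintype.card A))) :=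
          mul_le_mul_right (mul_le_mul_right (ENNReal.ofReal_le_ofReal hexps) _) _
      _ = ENNReal.ofReal (δ / (2 * H)) := by
          rw [← ENNReal.ofReal_ofNat, ← ENNReal.ofReal_natCast,
            ← ENNReal.ofReal_mul (by positivity), ← ENNReal.ofReal_mul (by positivity)]
          congr 1
          field_simp
          ring
  have hGmeas : MeasurableSet G := MeasurableSet.of_discrete
  have hG1 : μ G ≤ 1 := by
    have := measure_mono (Set.subset_univ G) (μ := μ)
    simpa using this
  have hcompl : μ G = 1 - μ Gᶜ := by
    have h1 : μ Gᶜ = 1 - μ G := by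
      rw [measure_compl hGmeas (measure_ne_top μ G), measure_univ]
    rw [h1, ENNReal.sub_sub_cancel ENNReal.one_ne_top hG1]
  rw [hcompl]
  calc ENNReal.ofReal (1 - δ / H) ≤ ENNReal.ofReal (1 - δ / (2 * H)) := by
        apply ENNReal.ofReal_le_ofReal
        have : δ / (2 * H) ≤ δ / H := by
          apply div_le_div_of_nonneg_left hδ.le hHpos
          linarith
        linarith
    _ = 1 - ENNReal.ofReal (δ / (2 * H)) := by
        rw [ENNReal.ofReal_sub _ (by positivity), ENNReal.ofReal_one]
    _ ≤ 1 - μ Gᶜ := tsub_le_tsub_left hbad 1
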